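/- Let q : ℝⁿ → ℝ be a C² function with q(0) = 0 and ∇q(0) = 0. Then for any R > 0, the integral of |q(x)| over the ball {|x| ≤ R} is bounded by C · R^(n+1) times the integral of |x|^(1-n) · ‖D²q(x)‖ over the same ball, where C depends only on n. -/

import Mathlib

open MeasureTheory
open scoped ENNReal

section Aux
open Set Metric

variable {E : Type*} [NormedAddCommGroup E] [NormedSpace ℝ E]

private lemma stepA (q : E → ℝ) (hq : ContDiff ℝ 2 q) (h0 : q 0 = 0)
    (h1 : fderiv ℝ q 0 = 0) (x : E) :
    |q x| ≤ (∫ s in (0:ℝ)..1, ‖iteratedFDeriv ℝ 2 q (s • x)‖) * ‖x‖ ^ 2 := by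
  -- ψ t = directional derivative along x at t • x
  set ψ : ℝ → ℝ := fun t => fderiv ℝ q (t • x) x with hψdef
  have hq1 : ContDiff ℝ 1 (fderiv ℝ q) := hq.fderiv_right (by norm_num)
  have hline : ∀ t : ℝ, HasDerivAt (fun u : ℝ => u • x) x t := by
    intro t
    simpa using (hasDerivAt_id t).smul_const x
  -- derivative of q along the line
  have hg : ∀ t : ℝ, HasDerivAt (fun u : ℝ => q (u • x)) (ψ t) t := by
    intro t
    exact ((hq.differentiable (by norm_num) (t • x)).hasFDerivAt.comp_hasDerivAt t
      (hline t))
  -- derivative of ψ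
  have hψ : ∀ t : ℝ, HasDerivAt ψ ((fderiv ℝ (fderiv ℝ q) (t • x)) x x) t := by
    intro t
    have h2 : HasDerivAt (fun u : ℝ => fderiv ℝ q (u • x))
        ((fderiv ℝ (fderiv ℝ q) (t • x)) x) t :=
      ((hq1.differentiable (by norm_num) (t • x)).hasFDerivAt.comp_hasDerivAt t (hline t))
    simpa using h2.clm_apply (hasDerivAt_const t x)
  -- continuity facts
  have hHcont : Continuous fun y => ‖iteratedFDeriv ℝ 2 q y‖ :=
    (hq.continuous_iteratedFDeriv (by norm_num)).norm
  have hψ'cont : Continuous fun t : ℝ => (fderiv ℝ (fderiv ℝ q) (t • x)) x x := by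
    have : Continuous (fderiv ℝ (fderiv ℝ q)) := hq1.continuous_fderiv (by norm_num)
    exact ((this.comp (continuous_id.smul continuous_const)).clm_apply
      continuous_const).clm_apply continuous_const
  have hψcont : Continuous ψ := by
    have : Continuous (fderiv ℝ q) := hq1.continuous
    exact (this.comp (continuous_id.smul continuous_const)).clm_apply continuous_const
  -- pointwise bound on ψ'
  have hbound : ∀ s : ℝ, |(fderiv ℝ (fderiv ℝ q) (s • x)) x x| ≤
      ‖iteratedFDeriv ℝ 2 q (s • x)‖ * ‖x‖ ^ 2 := by
    intro s
    have := (iteratedFDeriv_two_apply (𝕜 := ℝ) q (s • x) ![x, x]).symm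
    rw [show (![x,x] : Fin 2 → E) 0 = x from rfl, show (![x,x] : Fin 2 → E) 1 = x from rfl] at this
    calc |(fderiv ℝ (fderiv ℝ q) (s • x)) x x|
        = ‖iteratedFDeriv ℝ 2 q (s • x) ![x, x]‖ := by rw [← this]; rfl
      _ ≤ ‖iteratedFDeriv ℝ 2 q (s • x)‖ * ∏ i, ‖(![x,x] : Fin 2 → E) i‖ :=
          (iteratedFDeriv ℝ 2 q (s • x)).le_opNorm _
      _ = ‖iteratedFDeriv ℝ 2 q (s • x)‖ * ‖x‖ ^ 2 := by
          simp [Fin.prod_univ_two, sq]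
  -- ψ 0 = 0
  have hψ0 : ψ 0 = 0 := by simp [hψdef, h1]
  -- bound on |ψ t| for t ∈ [0,1]
  have hψle : ∀ t ∈ Set.Icc (0:ℝ) 1, |ψ t| ≤
      (∫ s in (0:ℝ)..1, ‖iteratedFDeriv ℝ 2 q (s • x)‖) * ‖x‖ ^ 2 := by
    intro t ht
    have hFTC : ∫ s in (0:ℝ)..t, (fderiv ℝ (fderiv ℝ q) (s • x)) x x = ψ t - ψ 0 :=
      intervalIntegral.integral_eq_sub_of_hasDerivAt (fun s _ => hψ s)
        (hψ'cont.intervalIntegrable _ _)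
    rw [hψ0, sub_zero] at hFTC
    rw [← hFTC]
    calc |∫ s in (0:ℝ)..t, (fderiv ℝ (fderiv ℝ q) (s • x)) x x|
        ≤ ∫ s in (0:ℝ)..t, |(fderiv ℝ (fderiv ℝ q) (s • x)) x x| :=
          intervalIntegral.abs_integral_le_integral_abs ht.1
      _ ≤ ∫ s in (0:ℝ)..t, ‖iteratedFDeriv ℝ 2 q (s • x)‖ * ‖x‖ ^ 2 := by
          apply intervalIntegral.integral_mono_on ht.1
            (hψ'cont.abs.intervalIntegrable _ _)
            (((hHcont.comp (continuous_id.smul continuous_const)).mul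
              continuous_const).intervalIntegrable _ _)
          intro s _; exact hbound s
      _ ≤ ∫ s in (0:ℝ)..1, ‖iteratedFDeriv ℝ 2 q (s • x)‖ * ‖x‖ ^ 2 := by
          apply intervalIntegral.integral_mono_interval le_rfl ht.1 ht.2
          · filter_upwards with s
            positivity
          · exact (((hHcont.comp (continuous_id.smul continuous_const)).mul
              continuous_const).intervalIntegrable _ _)
      _ = (∫ s in (0:ℝ)..1, ‖iteratedFDeriv ℝ 2 q (s • x)‖) * ‖x‖ ^ 2 := by
          rw [intervalIntegral.integral_mul_const]
  -- FTC for q along the line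
  have hq0 : q ((0:ℝ) • x) = 0 := by simpa using h0
  have hFTC2 : ∫ t in (0:ℝ)..1, ψ t = q x := by
    have := intervalIntegral.integral_eq_sub_of_hasDerivAt (fun t _ => hg t)
      (hψcont.intervalIntegrable 0 1)
    simpa [h0] using this
  rw [← hFTC2]
  calc |∫ t in (0:ℝ)..1, ψ t| ≤ ∫ t in (0:ℝ)..1, |ψ t| :=
        intervalIntegral.abs_integral_le_integral_abs zero_le_one
    _ ≤ ∫ t in (0:ℝ)..1,
        ((∫ s in (0:ℝ)..1, ‖iteratedFDeriv ℝ 2 q (s • x)‖) * ‖x‖ ^ 2) := by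
        apply intervalIntegral.integral_mono_on zero_le_one
          (hψcont.abs.intervalIntegrable _ _) (intervalIntegrable_const)
        exact hψle
    _ = (∫ s in (0:ℝ)..1, ‖iteratedFDeriv ℝ 2 q (s • x)‖) * ‖x‖ ^ 2 := by simp


private lemma keyW (n : ℕ) (R : ℝ) (hR : 0 < R) (r c : ℝ) (hr : 0 ≤ r) (hc : 0 ≤ c) :
    ENNReal.ofReal (r ^ 2) * ENNReal.ofReal c *
        ∫⁻ s in Set.Ioc (0:ℝ) 1,
          ({s : ℝ | r ≤ s * R}).indicator 1 s * ENNReal.ofReal ((s ^ (n + 2))⁻¹) ≤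
      ({r' : ℝ | r' ≤ R}).indicator 1 r * ENNReal.ofReal (R ^ (n + 1)) *
        ENNReal.ofReal (r ^ ((1 : ℝ) - n) * c) := by
  rcases eq_or_lt_of_le hr with hr0 | hr0
  · -- r = 0
    rw [← hr0]
    simp
  by_cases hrR : R < r
  · -- integrand vanishes
    have : ∀ s ∈ Set.Ioc (0:ℝ) 1,
        ({s : ℝ | r ≤ s * R}).indicator 1 s * ENNReal.ofReal ((s ^ (n + 2))⁻¹) = 0 := by
      intro s hs
      have h1 : ¬ r ≤ s * R := by
        push_neg
        calc s * R ≤ 1 * R := by nlinarith [hs.1, hs.2]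
          _ = R := one_mul R
          _ < r := hrR
      simp only [Set.indicator_apply, Set.mem_setOf_eq, if_neg h1, zero_mul]
    rw [setLIntegral_congr_fun measurableSet_Ioc this]
    simp
  push_neg at hrR
  -- main case : 0 < r ≤ R
  set t₀ : ℝ := r / R with ht₀def
  have ht₀ : 0 < t₀ := div_pos hr0 hR
  have ht₀1 : t₀ ≤ 1 := by rw [div_le_one hR]; exact hrR
  -- bound the lintegral
  have hWle : (∫⁻ s in Set.Ioc (0:ℝ) 1,
      ({s : ℝ | r ≤ s * R}).indicator 1 s * ENNReal.ofReal ((s ^ (n + 2))⁻¹))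
      ≤ ENNReal.ofReal ((t₀ ^ (n + 1))⁻¹) := by
    have hmono : (∫⁻ s in Set.Ioc (0:ℝ) 1,
        ({s : ℝ | r ≤ s * R}).indicator 1 s * ENNReal.ofReal ((s ^ (n + 2))⁻¹))
        ≤ ∫⁻ s, (Set.Icc t₀ 1).indicator (fun s => ENNReal.ofReal ((s ^ (n + 2))⁻¹)) s := by
      rw [← lintegral_indicator measurableSet_Ioc]
      apply lintegral_mono
      intro s
      by_cases hs : s ∈ Set.Ioc (0:ℝ) 1
      · rw [Set.indicator_of_mem hs]
        by_cases hrs : r ≤ s * R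
        · have hsmem : s ∈ Set.Icc t₀ 1 := ⟨(div_le_iff₀ hR).2 hrs, hs.2⟩
          simp only [Set.indicator_apply, Set.mem_setOf_eq, if_pos hrs, if_pos hsmem,
            Pi.one_apply, one_mul]
          exact le_rfl
        · simp only [Set.indicator_apply, Set.mem_setOf_eq, if_neg hrs, zero_mul]
          exact zero_le
      · rw [Set.indicator_of_notMem hs]
        exact zero_le
    rw [lintegral_indicator measurableSet_Icc] at hmono
    refine hmono.trans ?_
    have hint : IntegrableOn (fun s : ℝ => (s ^ (n + 2))⁻¹) (Set.Icc t₀ 1) := by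
      apply ContinuousOn.integrableOn_Icc
      apply ContinuousOn.inv₀ (continuousOn_pow _)
      intro s hs
      exact pow_ne_zero _ (ne_of_gt (lt_of_lt_of_le ht₀ hs.1))
    rw [← ofReal_integral_eq_lintegral_ofReal hint
      (Filter.eventually_of_mem (self_mem_ae_restrict measurableSet_Icc)
        (fun s hs => by
          have : (0:ℝ) < s := lt_of_lt_of_le ht₀ hs.1
          positivity))]
    apply ENNReal.ofReal_le_ofReal
    -- compute the real integral
    have hIcc : ∫ s in Set.Icc t₀ 1, (s ^ (n + 2))⁻¹ = ∫ s in t₀..1, (s ^ (n + 2))⁻¹ := by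
      rw [intervalIntegral.integral_of_le ht₀1, integral_Icc_eq_integral_Ioc]
    rw [hIcc]
    have hzpow : ∀ s : ℝ, (s ^ (n + 2))⁻¹ = s ^ (-(n+2:ℕ) : ℤ) := by
      intro s; rw [zpow_neg, zpow_natCast]
    simp only [hzpow]
    rw [integral_zpow (Or.inr ⟨by omega, by
      intro h
      have h1 := h.1
      have h2 := h.2
      simp only [inf_le_iff, le_sup_iff] at h1 h2
      rcases h1 with h' | h' <;> linarith⟩)]
    have hm1 : (-(n+2:ℕ) : ℤ) + 1 = -(n+1:ℕ) := by push_cast; ring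
    rw [hm1, one_zpow, zpow_neg, zpow_natCast]
    have ha : (0:ℝ) < (t₀ ^ (n + 1))⁻¹ := by positivity
    have hden : ((-(n+2:ℕ) : ℤ) : ℝ) + 1 = -((n:ℝ)+1) := by push_cast; ring
    rw [hden, div_le_iff_of_neg (by
      have : (0:ℝ) < (n:ℝ)+1 := by positivity
      linarith : -((n:ℝ)+1) < 0)]
    nlinarith [ha.le, Nat.cast_nonneg (α := ℝ) n]
  -- conclude
  have hrne : r ≠ 0 := ne_of_gt hr0
  have h1 : r ^ ((1:ℝ) - n) = r ^ 2 * (r ^ (n+1))⁻¹ := by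
    rw [show ((1:ℝ) - n) = (((1:ℤ) - n : ℤ) : ℝ) by push_cast; ring, Real.rpow_intCast,
      show ((1:ℤ) - n) = (2:ℤ) + (-(n+1:ℕ) : ℤ) by push_cast; ring,
      zpow_add₀ hrne, zpow_neg, zpow_natCast]
    norm_num
  have hmem : r ∈ {r' : ℝ | r' ≤ R} := hrR
  rw [Set.indicator_of_mem hmem, Pi.one_apply, one_mul]
  calc ENNReal.ofReal (r ^ 2) * ENNReal.ofReal c *
        ∫⁻ s in Set.Ioc (0:ℝ) 1,
          ({s : ℝ | r ≤ s * R}).indicator 1 s * ENNReal.ofReal ((s ^ (n + 2))⁻¹)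
      ≤ ENNReal.ofReal (r ^ 2) * ENNReal.ofReal c * ENNReal.ofReal ((t₀ ^ (n + 1))⁻¹) :=
        mul_le_mul_right hWle _
    _ = ENNReal.ofReal (r ^ 2 * c * (t₀ ^ (n + 1))⁻¹) := by
        rw [← ENNReal.ofReal_mul (sq_nonneg r), ← ENNReal.ofReal_mul (by positivity)]
    _ = ENNReal.ofReal (R ^ (n + 1)) * ENNReal.ofReal (r ^ ((1:ℝ) - n) * c) := by
        rw [← ENNReal.ofReal_mul (by positivity)]
        congr 1
        rw [h1, ht₀def, div_pow, inv_div]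
        field_simp


private lemma finK {E : Type*} [NormedAddCommGroup E] [NormedSpace ℝ E] [MeasurableSpace E]
    [BorelSpace E] [FiniteDimensional ℝ E] (μ : Measure E) [μ.IsAddHaarMeasure]
    (n : ℕ) (hn : 1 ≤ n) (hfr : Module.finrank ℝ E = n) (R : ℝ) (hR : 0 < R) :
    ∫⁻ y in Metric.closedBall (0 : E) R, ENNReal.ofReal (‖y‖ ^ ((1 : ℝ) - n)) ∂μ ≠ ⊤ := by
  haveI : Nontrivial E := Module.nontrivial_of_finrank_pos (R := ℝ) (by omega : 0 < Module.finrank ℝ E)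
  rw [← lt_top_iff_ne_top]
  set p : ℝ := (1 : ℝ) - n with hp
  have hp0 : p ≤ 0 := by
    rw [hp, sub_nonpos]
    exact_mod_cast hn
  set A : ℕ → Set E := fun k => {y : E | R / 2 ^ (k+1) < ‖y‖ ∧ ‖y‖ ≤ R / 2 ^ k} with hA
  -- covering
  have hcover : Metric.closedBall (0 : E) R ⊆ {0} ∪ ⋃ k, A k := by
    intro y hy
    rw [Metric.mem_closedBall, dist_zero_right] at hy
    by_cases hy0 : y = 0
    · exact Or.inl hy0
    right
    have hy0' : 0 < ‖y‖ := norm_pos_iff.2 hy0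
    have hex : ∃ m : ℕ, R < ‖y‖ * 2 ^ (m + 1) := by
      obtain ⟨m, hm⟩ := pow_unbounded_of_one_lt (R / ‖y‖) (one_lt_two (α := ℝ))
      exact ⟨m, by
        rw [div_lt_iff₀ hy0'] at hm
        calc R < 2 ^ m * ‖y‖ := hm
          _ ≤ ‖y‖ * 2 ^ (m+1) := by
            rw [mul_comm]
            have : (2:ℝ) ^ m ≤ 2 ^ (m+1) := by
              apply pow_le_pow_right₀ one_le_two (Nat.le_succ m)
            nlinarith⟩
    have hk1 : R < ‖y‖ * 2 ^ (Nat.find hex + 1) := Nat.find_spec hex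
    refine Set.mem_iUnion.2 ⟨Nat.find hex, ?_, ?_⟩
    · rw [div_lt_iff₀ (by positivity)]
      linarith [hk1]
    · rcases Nat.eq_zero_or_pos (Nat.find hex) with hk0 | hkpos
      · rw [hk0]; simpa using hy
      · have hj : Nat.find hex - 1 < Nat.find hex := by omega
        have hmin := Nat.find_min hex hj
        push_neg at hmin
        rw [le_div_iff₀ (by positivity)]
        have heq : Nat.find hex - 1 + 1 = Nat.find hex := by omega
        rwa [heq] at hmin
  have V := measure_closedBall_lt_top (μ := μ) (x := (0:E)) (r := 1)
  calc ∫⁻ y in Metric.closedBall (0 : E) R, ENNReal.ofReal (‖y‖ ^ p) ∂μ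
      ≤ ∫⁻ y in ({0} ∪ ⋃ k, A k), ENNReal.ofReal (‖y‖ ^ p) ∂μ :=
        lintegral_mono_set hcover
    _ ≤ (∫⁻ y in ({0} : Set E), ENNReal.ofReal (‖y‖ ^ p) ∂μ)
        + ∫⁻ y in (⋃ k, A k), ENNReal.ofReal (‖y‖ ^ p) ∂μ := lintegral_union_le _ _ _
    _ ≤ 0 + ∑' k, ∫⁻ y in A k, ENNReal.ofReal (‖y‖ ^ p) ∂μ := by
        gcongr
        · rw [lintegral_singleton]
          simp
        · exact lintegral_iUnion_le _ _
    _ ≤ ∑' k, (ENNReal.ofReal (2 ^ (n-1) * R) * ENNReal.ofReal ((2:ℝ)⁻¹) ^ k)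
          * μ (Metric.closedBall 0 1) := by
        rw [zero_add]
        apply ENNReal.tsum_le_tsum
        intro k
        have hterm : ∫⁻ y in A k, ENNReal.ofReal (‖y‖ ^ p) ∂μ
            ≤ ENNReal.ofReal ((R / 2 ^ (k+1)) ^ p) * μ (A k) := by
          rw [← setLIntegral_const (A k) _]
          apply setLIntegral_mono measurable_const
          intro y hy
          apply ENNReal.ofReal_le_ofReal
          exact Real.rpow_le_rpow_of_nonpos (by positivity) hy.1.le hp0
        refine hterm.trans ?_
        have hAsub : A k ⊆ Metric.closedBall (0:E) (R / 2 ^ k) := by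
          intro y hy
          rw [Metric.mem_closedBall, dist_zero_right]
          exact hy.2
        have hμA : μ (A k) ≤ ENNReal.ofReal ((R / 2 ^ k) ^ n) * μ (Metric.closedBall 0 1) := by
          refine (measure_mono hAsub).trans ?_
          rw [Measure.addHaar_closedBall μ (0:E) (by positivity : (0:ℝ) ≤ R / 2 ^ k), hfr]
          exact mul_le_mul_right (measure_mono Metric.ball_subset_closedBall) _
        calc ENNReal.ofReal ((R / 2 ^ (k+1)) ^ p) * μ (A k)
            ≤ ENNReal.ofReal ((R / 2 ^ (k+1)) ^ p) *
              (ENNReal.ofReal ((R / 2 ^ k) ^ n) * μ (Metric.closedBall 0 1)) :=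
              mul_le_mul_right hμA _
          _ = (ENNReal.ofReal ((R / 2 ^ (k+1)) ^ p) * ENNReal.ofReal ((R / 2 ^ k) ^ n))
              * μ (Metric.closedBall 0 1) := by ring
          _ = (ENNReal.ofReal (2 ^ (n-1) * R) * ENNReal.ofReal ((2:ℝ)⁻¹) ^ k)
              * μ (Metric.closedBall 0 1) := by
              have ha : (0:ℝ) < R / 2 ^ k := by positivity
              have h2 : (R / 2 ^ (k+1)) = (R / 2 ^ k) / 2 := by
                rw [pow_succ]; ring
              have hcomb : (R / 2 ^ k) ^ p * (R / 2 ^ k) ^ (n:ℕ) = R / 2 ^ k := by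
                rw [← Real.rpow_natCast (R / 2 ^ k) n, ← Real.rpow_add ha, hp]
                norm_num
              have h2p : ((2:ℝ) ^ p)⁻¹ = 2 ^ (n-1 : ℕ) := by
                rw [← Real.rpow_neg (by norm_num : (0:ℝ) ≤ 2)]
                have hnp : -p = ((n-1:ℕ):ℝ) := by
                  rw [hp, Nat.cast_sub hn]
                  push_cast
                  ring
                rw [hnp, Real.rpow_natCast]
              have hreal : (R / 2 ^ (k+1)) ^ p * (R / 2 ^ k) ^ n
                  = 2 ^ (n-1:ℕ) * R * ((2:ℝ)⁻¹) ^ k := by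
                calc (R / 2 ^ (k+1)) ^ p * (R / 2 ^ k) ^ n
                    = (R / 2 ^ k) ^ p / 2 ^ p * (R / 2 ^ k) ^ n := by
                      rw [h2, Real.div_rpow ha.le (by norm_num)]
                  _ = ((2:ℝ) ^ p)⁻¹ * ((R / 2 ^ k) ^ p * (R / 2 ^ k) ^ (n:ℕ)) := by ring
                  _ = 2 ^ (n-1:ℕ) * (R / 2 ^ k) := by rw [h2p, hcomb]
                  _ = 2 ^ (n-1:ℕ) * R * ((2:ℝ)⁻¹) ^ k := by
                      rw [div_eq_mul_inv, ← inv_pow]; ring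
              rw [← ENNReal.ofReal_mul (by positivity : (0:ℝ) ≤ (R / 2 ^ (k+1)) ^ p), hreal,
                ENNReal.ofReal_mul (by positivity : (0:ℝ) ≤ 2 ^ (n-1:ℕ) * R),
                ENNReal.ofReal_pow (by norm_num : (0:ℝ) ≤ (2:ℝ)⁻¹)]
    _ < ⊤ := by
        rw [ENNReal.tsum_mul_right, ENNReal.tsum_mul_left, ENNReal.tsum_geometric]
        apply ENNReal.mul_lt_top (ENNReal.mul_lt_top ENNReal.ofReal_lt_top _) V
        rw [lt_top_iff_ne_top]
        apply ENNReal.inv_ne_top.2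
        rw [ne_eq, tsub_eq_zero_iff_le, not_le]
        calc ENNReal.ofReal (2:ℝ)⁻¹ < ENNReal.ofReal 1 := by
              rw [ENNReal.ofReal_lt_ofReal_iff] <;> norm_num
          _ = 1 := ENNReal.ofReal_one


end Aux

/-- Radial fundamental-theorem-of-calculus lemma: if `q` is `C²` with `q 0 = 0` and
`∇q 0 = 0`, then `∫_{|x| ≤ R} |q| ≲ R^(n+1) ∫_{|x| ≤ R} |x|^(1-n) ‖D²q‖`,
with a constant depending only on the dimension `n`. -/
theorem stmt0 (n : ℕ) (hn : 1 ≤ n) :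
    ∃ C > 0, ∀ (q : EuclideanSpace ℝ (Fin n) → ℝ),
      ContDiff ℝ 2 q → q 0 = 0 → fderiv ℝ q 0 = 0 →
      ∀ R > 0,
        ∫ x in Metric.closedBall (0 : EuclideanSpace ℝ (Fin n)) R, |q x| ≤
          C * R ^ (n + 1) *
            ∫ x in Metric.closedBall (0 : EuclideanSpace ℝ (Fin n)) R,
              ‖x‖ ^ ((1 : ℝ) - n) * ‖iteratedFDeriv ℝ 2 q x‖ := by
  refine ⟨1, one_pos, ?_⟩
  intro q hq hq0 hq1 R hR
  open Set Metric in

  set B := Metric.closedBall (0 : (EuclideanSpace ℝ (Fin n))) R with hBdef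
  set Hq : (EuclideanSpace ℝ (Fin n)) → ℝ := fun y => ‖iteratedFDeriv ℝ 2 q y‖ with hHqdef
  have hHc : Continuous Hq := (hq.continuous_iteratedFDeriv (by norm_num)).norm
  set F : (EuclideanSpace ℝ (Fin n)) → ℝ → ℝ≥0∞ := fun x s =>
    B.indicator 1 x * (Set.Ioc (0:ℝ) 1).indicator 1 s * ENNReal.ofReal (‖x‖ ^ 2) *
      ENNReal.ofReal (Hq (s • x)) with hFdef
  set F₂ : ℝ → (EuclideanSpace ℝ (Fin n)) → ℝ≥0∞ := fun s y =>
    (Set.Ioc (0:ℝ) 1).indicator 1 s * ENNReal.ofReal ((s ^ (n + 2))⁻¹) *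
      ({p : ℝ × (EuclideanSpace ℝ (Fin n)) | ‖p.2‖ ≤ p.1 * R}).indicator 1 (s, y) *
      ENNReal.ofReal (‖y‖ ^ 2) * ENNReal.ofReal (Hq y) with hF₂def
  set L : ℝ≥0∞ := ∫⁻ x in B, ENNReal.ofReal |q x| ∂volume with hLdef
  set J : ℝ≥0∞ := ∫⁻ y in B, ENNReal.ofReal (‖y‖ ^ ((1 : ℝ) - n) * Hq y) ∂volume with hJdef
  -- measurability of the two product functions
  have hSm : MeasurableSet {p : ℝ × (EuclideanSpace ℝ (Fin n)) | ‖p.2‖ ≤ p.1 * R} :=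
    measurableSet_le measurable_snd.norm (measurable_fst.mul_const R)
  have hFm : Measurable (Function.uncurry F) := by
    apply Measurable.mul
    apply Measurable.mul
    apply Measurable.mul
    · exact (measurable_one.indicator measurableSet_closedBall).comp measurable_fst
    · exact (measurable_one.indicator measurableSet_Ioc).comp measurable_snd
    · exact (measurable_fst.norm.pow_const 2).ennreal_ofReal
    · exact (hHc.comp (continuous_snd.smul continuous_fst)).measurable.ennreal_ofReal
  have hF₂m : Measurable (Function.uncurry F₂) := by
    apply Measurable.mul
    apply Measurable.mul
    apply Measurable.mul
    apply Measurable.mul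
    · exact (measurable_one.indicator measurableSet_Ioc).comp measurable_fst
    · exact ((measurable_fst.pow_const (n+2)).inv).ennreal_ofReal
    · exact measurable_one.indicator hSm
    · exact (measurable_snd.norm.pow_const 2).ennreal_ofReal
    · exact (hHc.measurable.comp measurable_snd).ennreal_ofReal
  -- Step 1 : L ≤ ∫⁻ x, ∫⁻ s, F x s
  have h1 : L ≤ ∫⁻ x, ∫⁻ s, F x s ∂volume ∂volume := by
    rw [hLdef, ← lintegral_indicator measurableSet_closedBall]
    apply lintegral_mono
    intro x
    by_cases hx : x ∈ B
    · rw [Set.indicator_of_mem hx]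
      have hFx : (∫⁻ s, F x s ∂volume)
          = (∫⁻ s in Set.Ioc (0:ℝ) 1, ENNReal.ofReal (Hq (s • x)) ∂volume)
            * ENNReal.ofReal (‖x‖ ^ 2) := by
        rw [← lintegral_indicator measurableSet_Ioc,
          ← lintegral_mul_const' (ENNReal.ofReal (‖x‖ ^ 2)) _ ENNReal.ofReal_ne_top]
        apply lintegral_congr
        intro s
        simp only [hFdef, Set.indicator_apply]
        by_cases hs : s ∈ Set.Ioc (0:ℝ) 1
        · simp [hx, hs]
          ring
        · simp [hx, hs]
      show ENNReal.ofReal |q x| ≤ ∫⁻ s, F x s ∂volume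
      rw [hFx]
      have hA := stepA q hq hq0 hq1 x
      have hint : IntegrableOn (fun s : ℝ => Hq (s • x)) (Set.Ioc (0:ℝ) 1) := by
        apply Continuous.integrableOn_Ioc
        exact hHc.comp (continuous_id.smul continuous_const)
      calc ENNReal.ofReal |q x|
          ≤ ENNReal.ofReal ((∫ s in (0:ℝ)..1, Hq (s • x)) * ‖x‖ ^ 2) :=
            ENNReal.ofReal_le_ofReal hA
        _ = ENNReal.ofReal (∫ s in (0:ℝ)..1, Hq (s • x)) * ENNReal.ofReal (‖x‖ ^ 2) := by
            rw [ENNReal.ofReal_mul (intervalIntegral.integral_nonneg zero_le_one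
              (fun s _ => norm_nonneg _))]
        _ = (∫⁻ s in Set.Ioc (0:ℝ) 1, ENNReal.ofReal (Hq (s • x)) ∂volume)
            * ENNReal.ofReal (‖x‖ ^ 2) := by
            rw [intervalIntegral.integral_of_le zero_le_one,
              ofReal_integral_eq_lintegral_ofReal hint
                (Filter.Eventually.of_forall fun s => norm_nonneg _)]
    · rw [Set.indicator_of_notMem hx]
      exact zero_le
  -- Step 2 : swap
  have h2 : ∫⁻ x, ∫⁻ s, F x s ∂volume ∂volume = ∫⁻ s, ∫⁻ x, F x s ∂volume ∂volume :=
    lintegral_lintegral_swap hFm.aemeasurable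
  -- Step 3 : change of variables
  have h3 : ∀ s : ℝ, (∫⁻ x, F x s ∂volume) ≤ ∫⁻ y, F₂ s y ∂volume := by
    intro s
    by_cases hs : s ∈ Set.Ioc (0:ℝ) 1
    · have hs0 : 0 < s := hs.1
      have hsne : s ≠ 0 := ne_of_gt hs0
      set G : (EuclideanSpace ℝ (Fin n)) → ℝ≥0∞ := fun y =>
        (Metric.closedBall (0:(EuclideanSpace ℝ (Fin n))) (s * R)).indicator 1 y *
          ENNReal.ofReal ((s ^ 2)⁻¹ * ‖y‖ ^ 2) * ENNReal.ofReal (Hq y) with hGdef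
      have hGm : Measurable G := by
        apply Measurable.mul
        apply Measurable.mul
        · exact measurable_one.indicator measurableSet_closedBall
        · exact ((measurable_norm.pow_const 2).const_mul _).ennreal_ofReal
        · exact hHc.measurable.ennreal_ofReal
      have hFG : ∀ x : (EuclideanSpace ℝ (Fin n)), F x s = G (s • x) := by
        intro x
        simp only [hFdef, hGdef]
        have hnorm : ‖s • x‖ = s * ‖x‖ := by
          rw [norm_smul, Real.norm_eq_abs, abs_of_pos hs0]
        have hmem : x ∈ B ↔ s • x ∈ Metric.closedBall (0:(EuclideanSpace ℝ (Fin n))) (s * R) := by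
          rw [hBdef, Metric.mem_closedBall, Metric.mem_closedBall, dist_zero_right,
            dist_zero_right, hnorm]
          exact (mul_le_mul_iff_right₀ hs0).symm
        have hsq : (s ^ 2)⁻¹ * ‖s • x‖ ^ 2 = ‖x‖ ^ 2 := by
          rw [hnorm, mul_pow]
          field_simp
        rw [hsq, Set.indicator_of_mem hs, Pi.one_apply]
        by_cases hx : x ∈ B
        · rw [Set.indicator_of_mem hx, Set.indicator_of_mem (hmem.1 hx)]
          simp
        · rw [Set.indicator_of_notMem hx, Set.indicator_of_notMem (fun h => hx (hmem.2 h))]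
          simp
      have hCV : (∫⁻ x, G (s • x) ∂volume)
          = ENNReal.ofReal |(s ^ n)⁻¹| * ∫⁻ y, G y ∂volume := by
        have := lintegral_map (μ := (volume : Measure (EuclideanSpace ℝ (Fin n)))) hGm (measurable_const_smul (M := ℝ) (α := (EuclideanSpace ℝ (Fin n))) s)
        rw [show (fun x : (EuclideanSpace ℝ (Fin n)) => G (s • x)) = fun x : (EuclideanSpace ℝ (Fin n)) => G ((s • ·) x) from rfl]
        rw [← this, Measure.map_addHaar_smul volume hsne, lintegral_smul_measure,
          finrank_euclideanSpace_fin, smul_eq_mul]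
      have hF₂G : ∀ y : (EuclideanSpace ℝ (Fin n)), F₂ s y = ENNReal.ofReal |(s ^ n)⁻¹| * G y := by
        intro y
        simp only [hF₂def, hGdef]
        rw [Set.indicator_of_mem hs, Pi.one_apply]
        have habs : |(s ^ n)⁻¹| = (s ^ n)⁻¹ := abs_of_pos (by positivity)
        have hmem2 : (s, y) ∈ {p : ℝ × (EuclideanSpace ℝ (Fin n)) | ‖p.2‖ ≤ p.1 * R} ↔
            y ∈ Metric.closedBall (0:(EuclideanSpace ℝ (Fin n))) (s * R) := by
          rw [Metric.mem_closedBall, dist_zero_right]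
          exact Iff.rfl
        have hscal : (s ^ (n + 2))⁻¹ * ‖y‖ ^ 2 = (s ^ n)⁻¹ * ((s ^ 2)⁻¹ * ‖y‖ ^ 2) := by
          rw [pow_add]
          field_simp
        by_cases hy : y ∈ Metric.closedBall (0:(EuclideanSpace ℝ (Fin n))) (s * R)
        · rw [Set.indicator_of_mem (hmem2.2 hy), Set.indicator_of_mem hy, habs]
          simp only [Pi.one_apply, one_mul, mul_one]
          calc ENNReal.ofReal ((s ^ (n+2))⁻¹) * ENNReal.ofReal (‖y‖^2) * ENNReal.ofReal (Hq y)
              = ENNReal.ofReal ((s ^ (n+2))⁻¹ * ‖y‖^2 * Hq y) := by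
                rw [← ENNReal.ofReal_mul (by positivity), ← ENNReal.ofReal_mul (by positivity)]
            _ = ENNReal.ofReal ((s^n)⁻¹ * ((s^2)⁻¹ * ‖y‖^2) * Hq y) := by rw [hscal]
            _ = ENNReal.ofReal ((s^n)⁻¹) *
                (ENNReal.ofReal ((s^2)⁻¹ * ‖y‖^2) * ENNReal.ofReal (Hq y)) := by
                rw [ENNReal.ofReal_mul (by positivity), ENNReal.ofReal_mul (by positivity),
                  mul_assoc]
        · rw [Set.indicator_of_notMem (fun h => hy (hmem2.1 h)), Set.indicator_of_notMem hy]
          simp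
      refine le_of_eq ?_
      calc (∫⁻ x, F x s ∂volume) = ∫⁻ x, G (s • x) ∂volume := lintegral_congr hFG
        _ = ENNReal.ofReal |(s ^ n)⁻¹| * ∫⁻ y, G y ∂volume := hCV
        _ = ∫⁻ y, ENNReal.ofReal |(s ^ n)⁻¹| * G y ∂volume :=
            (lintegral_const_mul' _ _ ENNReal.ofReal_ne_top).symm
        _ = ∫⁻ y, F₂ s y ∂volume := lintegral_congr fun y => (hF₂G y).symm
    · have hz : ∀ x : (EuclideanSpace ℝ (Fin n)), F x s = 0 := by
        intro x
        simp [hFdef, Set.indicator_of_notMem hs]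
      rw [lintegral_congr hz, lintegral_zero]
      exact zero_le
  -- Step 4 : swap back
  have h4 : ∫⁻ s, ∫⁻ y, F₂ s y ∂volume ∂volume = ∫⁻ y, ∫⁻ s, F₂ s y ∂volume ∂volume :=
    lintegral_lintegral_swap hF₂m.aemeasurable
  -- Step 5 : pointwise bound in y
  have h5 : ∀ y : (EuclideanSpace ℝ (Fin n)), (∫⁻ s, F₂ s y ∂volume) ≤
      B.indicator 1 y * ENNReal.ofReal (R ^ (n + 1)) *
        ENNReal.ofReal (‖y‖ ^ ((1 : ℝ) - n) * Hq y) := by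
    intro y
    have hre : (∫⁻ s, F₂ s y ∂volume)
        = ENNReal.ofReal (‖y‖ ^ 2) * ENNReal.ofReal (Hq y) *
          ∫⁻ s in Set.Ioc (0:ℝ) 1,
            ({s : ℝ | ‖y‖ ≤ s * R}).indicator 1 s * ENNReal.ofReal ((s ^ (n + 2))⁻¹) := by
      rw [← lintegral_indicator measurableSet_Ioc,
        ← lintegral_const_mul' _ _ (ENNReal.mul_ne_top ENNReal.ofReal_ne_top
          ENNReal.ofReal_ne_top)]
      apply lintegral_congr
      intro s
      simp only [hF₂def, Set.indicator_apply, Set.mem_setOf_eq, Set.mem_Ioc]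
      by_cases hs : 0 < s ∧ s ≤ 1
      · by_cases hys : ‖y‖ ≤ s * R
        · simp only [if_pos hs, if_pos hys, Pi.one_apply]
          ring
        · simp only [if_pos hs, if_neg hys, Pi.one_apply]
          ring
      · simp only [if_neg hs]
        ring
    rw [hre]
    have := keyW n R hR ‖y‖ (Hq y) (norm_nonneg y) (norm_nonneg _)
    refine this.trans (le_of_eq ?_)
    congr 2
    have hmemB : y ∈ B ↔ ‖y‖ ≤ R := by
      rw [hBdef, Metric.mem_closedBall, dist_zero_right]
    by_cases hy : ‖y‖ ≤ R <;> simp [Set.indicator_apply, hmemB, hy]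
  -- Step 6 : fold
  have h6 : (∫⁻ y, B.indicator 1 y * ENNReal.ofReal (R ^ (n + 1)) *
      ENNReal.ofReal (‖y‖ ^ ((1 : ℝ) - n) * Hq y) ∂volume)
      = ENNReal.ofReal (R ^ (n + 1)) * J := by
    rw [hJdef, ← lintegral_indicator measurableSet_closedBall,
      ← lintegral_const_mul' _ _ ENNReal.ofReal_ne_top]
    apply lintegral_congr
    intro y
    by_cases hy : y ∈ B
    · simp only [Set.indicator_of_mem hy, Set.indicator_of_mem (show y ∈ Metric.closedBall (0 : EuclideanSpace ℝ (Fin n)) R from hy), Pi.one_apply, one_mul]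
    · simp [Set.indicator_of_notMem hy, Set.indicator_of_notMem (show y ∉ Metric.closedBall (0 : EuclideanSpace ℝ (Fin n)) R from hy)]
  -- combine
  have hmain : L ≤ ENNReal.ofReal (R ^ (n + 1)) * J := by
    calc L ≤ ∫⁻ x, ∫⁻ s, F x s ∂volume ∂volume := h1
      _ = ∫⁻ s, ∫⁻ x, F x s ∂volume ∂volume := h2
      _ ≤ ∫⁻ s, ∫⁻ y, F₂ s y ∂volume ∂volume := lintegral_mono h3
      _ = ∫⁻ y, ∫⁻ s, F₂ s y ∂volume ∂volume := h4
      _ ≤ ∫⁻ y, B.indicator 1 y * ENNReal.ofReal (R ^ (n + 1)) *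
          ENNReal.ofReal (‖y‖ ^ ((1 : ℝ) - n) * Hq y) ∂volume := lintegral_mono h5
      _ = ENNReal.ofReal (R ^ (n + 1)) * J := h6
  -- finiteness of J
  have hJfin : J ≠ ⊤ := by
    obtain ⟨M, hM⟩ := (isCompact_closedBall (0:(EuclideanSpace ℝ (Fin n))) R).exists_bound_of_continuousOn
      hHc.continuousOn
    have hJle : J ≤ (∫⁻ y in B, ENNReal.ofReal (‖y‖ ^ ((1 : ℝ) - n)) ∂volume)
        * ENNReal.ofReal M := by
      rw [hJdef, ← lintegral_mul_const' _ _ ENNReal.ofReal_ne_top]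
      apply setLIntegral_mono
        ((measurable_norm.pow_const _).ennreal_ofReal.mul_const _)
      intro y hy
      rw [← ENNReal.ofReal_mul (by positivity)]
      apply ENNReal.ofReal_le_ofReal
      apply mul_le_mul_of_nonneg_left _ (by positivity)
      calc Hq y ≤ ‖Hq y‖ := le_abs_self _
        _ ≤ M := hM y hy
    exact ne_top_of_le_ne_top (ENNReal.mul_ne_top (finK (volume : Measure (EuclideanSpace ℝ (Fin n))) n hn finrank_euclideanSpace_fin R hR) ENNReal.ofReal_ne_top) hJle
  -- convert to real integrals
  have hLHS : ∫ x in B, |q x| = L.toReal := by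
    rw [hLdef]
    exact integral_eq_lintegral_of_nonneg_ae
      (Filter.Eventually.of_forall fun x => abs_nonneg _)
      (hq.continuous.abs.aestronglyMeasurable)
  have hRHS : ∫ y in B, ‖y‖ ^ ((1 : ℝ) - n) * Hq y = J.toReal := by
    rw [hJdef]
    exact integral_eq_lintegral_of_nonneg_ae
      (Filter.Eventually.of_forall fun y => by positivity)
      (((measurable_norm.pow_const _).mul hHc.measurable).aestronglyMeasurable)
  rw [hLHS, hRHS, one_mul]
  have hfin' : ENNReal.ofReal (R ^ (n + 1)) * J ≠ ⊤ :=
    ENNReal.mul_ne_top ENNReal.ofReal_ne_top hJfin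
  have := ENNReal.toReal_mono hfin' hmain
  rwa [ENNReal.toReal_mul, ENNReal.toReal_ofReal (by positivity)] at this
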